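/- Let Γ be a group acting on a finite nonempty set V, and let L : V × V → ℤ be a Γ-equivariant integer Laplacian-type matrix (symmetric, nonpositive off-diagonal entries, zero row sums, L(γ·v, γ·w) = L(v,w)) whose support graph is connected. Then Jac := ker(deg)/L(ℤ^V) is a finite abelian group, and there is an isomorphism of ℤ[Γ]-modules Jac ≅ Hom_ℤ(Jac, ℚ/ℤ), where Γ acts on the Pontryagin dual by (γ·φ)(x) = φ(γ^{−1}·x) (the contragredient, i.e. ι-twisted, action). -/
import Mathlib


/- Auxiliary definitions for STATEMENT 16 (same framework as for Statement 3):
V a finite set, ℤ^V = V → ℤ, deg the sum of coordinates, L acting on ℤ^V by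
(Lx)(v) = Σ_w L(v,w)x(w), a group Γ acting on ℤ^V by (γ•x)(v) = x(γ⁻¹•v),
Jac = ker(deg)/L(ℤ^V). -/

section Defs

variable (V : Type) [Fintype V] (Γ : Type) [Group Γ] [MulAction Γ V]

/-- deg : ℤ^V → ℤ, the sum of coordinates. -/
noncomputable def degMap : (V → ℤ) →ₗ[ℤ] ℤ := ∑ v : V, LinearMap.proj v

/-- The endomorphism of ℤ^V given by the matrix L. -/
noncomputable def lapMap (L : V → V → ℤ) : (V → ℤ) →ₗ[ℤ] (V → ℤ) :=
  Matrix.mulVecLin (Matrix.of L)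

/-- The action of γ ∈ Γ on ℤ^V : (γ • x)(v) = x(γ⁻¹ • v). -/
noncomputable def actMap (γ : Γ) : (V → ℤ) →ₗ[ℤ] (V → ℤ) :=
  LinearMap.funLeft ℤ ℤ fun v => γ⁻¹ • v

/-- Jac = ker(deg)/L(ℤ^V). -/
noncomputable abbrev jacQuot (L : V → V → ℤ) :=
  ↥(LinearMap.ker (degMap V)) ⧸
    Submodule.comap (LinearMap.ker (degMap V)).subtype (LinearMap.range (lapMap V L))

/-- The projection ker(deg) → Jac. -/
noncomputable def jacMk (L : V → V → ℤ) :
    ↥(LinearMap.ker (degMap V)) →ₗ[ℤ] jacQuot V L :=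
  Submodule.mkQ _

end Defs

section Main
open scoped Matrix
set_option linter.unusedSectionVars false
variable (V : Type) [Fintype V] [Nonempty V] [DecidableEq V] (L : V → V → ℤ)

local notation "M" => ℚ ⧸ AddSubgroup.zmultiples (1 : ℚ)

noncomputable abbrev SS : Submodule ℤ ↥(LinearMap.ker (degMap V)) :=
  Submodule.comap (LinearMap.ker (degMap V)).subtype (LinearMap.range (lapMap V L))

def Lq : Matrix V V ℚ := Matrix.of (fun v w => (L v w : ℚ))

def cst (y : ↥(LinearMap.ker (degMap V))) : V → ℚ := fun v => ((y : V → ℤ) v : ℚ)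

noncomputable def mkM : ℚ →+ M := QuotientAddGroup.mk' _

lemma mkM_eq_zero_iff (r : ℚ) : mkM r = 0 ↔ ∃ n : ℤ, (n : ℚ) = r := by
  rw [mkM, QuotientAddGroup.mk'_apply, QuotientAddGroup.eq_zero_iff,
    AddSubgroup.mem_zmultiples_iff]
  constructor
  · rintro ⟨n, hn⟩; exact ⟨n, by simpa using hn⟩
  · rintro ⟨n, hn⟩; exact ⟨n, by simpa using hn⟩

lemma degMap_apply (y : V → ℤ) : degMap V y = ∑ v, y v := by
  simp [degMap, LinearMap.sum_apply]

lemma sum_cst (y : ↥(LinearMap.ker (degMap V))) : ∑ v, cst V y v = 0 := by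
  have := y.2
  rw [LinearMap.mem_ker, degMap_apply] at this
  simp only [cst]
  exact_mod_cast this

lemma cst_add (y z : ↥(LinearMap.ker (degMap V))) : cst V (y + z) = cst V y + cst V z := by
  funext v; simp [cst]

lemma cst_smul (c : ℤ) (y : ↥(LinearMap.ker (degMap V))) :
    cst V (c • y) = (c : ℚ) • cst V y := by
  funext v; simp [cst]

variable (hsymm : ∀ v w, L v w = L w v) (hrowsum : ∀ v, ∑ w, L v w = 0)

include hsymm in
lemma symdot (ξ η : V → ℚ) : ξ ⬝ᵥ ((Lq V L).mulVec η) = ((Lq V L).mulVec ξ) ⬝ᵥ η := by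
  simp only [dotProduct, Matrix.mulVec, Finset.mul_sum, Finset.sum_mul]
  rw [Finset.sum_comm]
  refine Finset.sum_congr rfl fun v _ => Finset.sum_congr rfl fun w _ => ?_
  rw [show Lq V L w v = Lq V L v w from by simp [Lq, hsymm w v]]
  ring

lemma cst_mulVec (u : V → ℤ) :
    (Lq V L).mulVec (fun v => (u v : ℚ)) = fun v => (((lapMap V L) u) v : ℚ) := by
  funext v
  simp only [lapMap, Matrix.mulVecLin_apply, Matrix.mulVec, dotProduct, Lq,
    Matrix.of_apply]
  push_cast
  rfl

include hsymm hrowsum in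
lemma colsum (w : V) : ∑ v, L v w = 0 := by
  simp_rw [fun v => hsymm v w]; exact hrowsum w

lemma lap_single (v w : V) : ((lapMap V L) (Pi.single v 1)) w = L w v := by
  simp [lapMap, Matrix.mulVec, dotProduct, Pi.single_apply, mul_ite]

noncomputable def colK (hsymm : ∀ v w, L v w = L w v) (hrowsum : ∀ v, ∑ w, L v w = 0)
    (v : V) : ↥(LinearMap.ker (degMap V)) :=
  ⟨(lapMap V L) (Pi.single v 1), by
    rw [LinearMap.mem_ker, degMap_apply]
    simp_rw [lap_single]
    exact colsum V L hsymm hrowsum v⟩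

lemma colK_mem (v : V) : colK V L hsymm hrowsum v ∈ SS V L :=
  ⟨Pi.single v 1, rfl⟩

lemma cst_colK (v w : V) : cst V (colK V L hsymm hrowsum v) w = Lq V L v w := by
  simp only [cst, colK, Lq, Matrix.of_apply, lap_single]
  exact_mod_cast hsymm w v

noncomputable def basK (v0 v : V) : ↥(LinearMap.ker (degMap V)) :=
  ⟨Pi.single v 1 - Pi.single v0 1, by
    rw [LinearMap.mem_ker, degMap_apply]
    simp [Finset.sum_sub_distrib, Pi.single_apply]⟩

lemma cst_basK (v0 v w : V) :
    cst V (basK V v0 v) w = (if v = w then (1:ℚ) else 0) - (if v0 = w then 1 else 0) := by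
  simp only [cst, basK, Pi.sub_apply, Pi.single_apply]
  push_cast [apply_ite (fun z : ℤ => (z : ℚ))]
  simp [eq_comm]

lemma sum_smul_basK (v0 : V) (y : ↥(LinearMap.ker (degMap V))) :
    ∑ v, (y : V → ℤ) v • basK V v0 v = y := by
  apply Subtype.ext
  have hcoe : ((∑ v, (y : V → ℤ) v • basK V v0 v : ↥(LinearMap.ker (degMap V))) : V → ℤ)
      = ∑ v, (y : V → ℤ) v • ((basK V v0 v : ↥(LinearMap.ker (degMap V))) : V → ℤ) := by
    simp
  rw [hcoe]
  funext w
  have hy := y.2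
  rw [LinearMap.mem_ker, degMap_apply] at hy
  simp only [basK, Finset.sum_apply, Pi.smul_apply, smul_eq_mul, Pi.sub_apply, mul_sub]
  rw [Finset.sum_sub_distrib]
  have h1 : ∑ v, (y : V → ℤ) v * (Pi.single v 1 : V → ℤ) w = (y : V → ℤ) w := by
    simp [Pi.single_apply]
  have h2 : ∑ v, (y : V → ℤ) v * (Pi.single v0 1 : V → ℤ) w = 0 := by
    rw [← Finset.sum_mul, hy, zero_mul]
  rw [h1, h2, sub_zero]

variable (hoffdiag : ∀ v w, v ≠ w → L v w ≤ 0)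
    (hconn : (SimpleGraph.fromRel fun v w => L v w ≠ 0).Connected)

include hsymm hoffdiag hrowsum hconn in
lemma lap_ker_const (x : V → ℚ) (hx : (Lq V L).mulVec x = 0) (v w : V) :
    x v = x w := by
  classical
  obtain ⟨v0, -, hmax⟩ := Finset.exists_max_image Finset.univ x ⟨Classical.arbitrary V, Finset.mem_univ _⟩
  set G := SimpleGraph.fromRel fun v w => L v w ≠ 0 with hG
  have step : ∀ a b : V, G.Adj a b → x a = x v0 → x b = x v0 := by
    intro a b hab ha
    have h2 : ∑ u, (L a u : ℚ) * x u = 0 := congrFun hx a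
    have h3 : ∑ u, (L a u : ℚ) = 0 := by exact_mod_cast hrowsum a
    have h1 : ∑ u, (L a u : ℚ) * (x u - x a) = 0 := by
      simp only [mul_sub, Finset.sum_sub_distrib, ← Finset.sum_mul, h2, h3, zero_mul, sub_zero]
    have hnonneg : ∀ u ∈ Finset.univ, 0 ≤ (L a u : ℚ) * (x u - x a) := by
      intro u _
      rcases eq_or_ne u a with rfl | hu
      · simp
      · have h4 : (L a u : ℚ) ≤ 0 := by exact_mod_cast hoffdiag a u (Ne.symm hu)
        have h5 : x u - x a ≤ 0 := by
          have := hmax u (Finset.mem_univ u)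
          rw [ha]; linarith
        nlinarith
    have hz := (Finset.sum_eq_zero_iff_of_nonneg hnonneg).mp h1 b (Finset.mem_univ b)
    have hLab : (L a b : ℚ) ≠ 0 := by
      rw [hG, SimpleGraph.fromRel_adj] at hab
      rcases hab.2 with h | h
      · exact_mod_cast h
      · rw [hsymm a b]; exact_mod_cast h
    have hxba : x b - x a = 0 := by
      rcases mul_eq_zero.mp hz with h | h
      · exact absurd h hLab
      · exact h
    rw [← ha]; linarith
  have walkstep : ∀ (a b : V) (_ : G.Walk a b), x a = x v0 → x b = x v0 := by
    intro a b p
    induction p with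
    | nil => exact id
    | cons h q ih => intro ha; exact ih (step _ _ h ha)
  have main : ∀ u : V, x u = x v0 := fun u =>
    walkstep v0 u (hconn.preconnected v0 u).some rfl
  rw [main v, main w]

include hsymm hoffdiag hrowsum hconn in
lemma lap_surj (x : V → ℚ) (hx : ∑ v, x v = 0) :
    ∃ ξ : V → ℚ, (Lq V L).mulVec ξ = x := by
  classical
  set A : (V → ℚ) →ₗ[ℚ] (V → ℚ) := Matrix.mulVecLin (Lq V L) with hA
  set d : (V → ℚ) →ₗ[ℚ] ℚ := ∑ v : V, LinearMap.proj v with hd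
  have hdapp : ∀ y : V → ℚ, d y = ∑ v, y v := by
    intro y; rw [hd]; simp [LinearMap.sum_apply]
  have hrowq : ∀ v, ∑ w, Lq V L v w = 0 := fun v => by
    have : ∑ w, ((L v w : ℚ)) = 0 := by exact_mod_cast hrowsum v
    simpa [Lq] using this
  have hcolq : ∀ w, ∑ v, Lq V L v w = 0 := fun w => by
    have : ∑ v, ((L v w : ℚ)) = 0 := by exact_mod_cast colsum V L hsymm hrowsum w
    simpa [Lq] using this
  have hker : LinearMap.ker A = ℚ ∙ (1 : V → ℚ) := by
    apply le_antisymm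
    · intro y hy
      rw [LinearMap.mem_ker] at hy
      rw [Submodule.mem_span_singleton]
      refine ⟨y (Classical.arbitrary V), ?_⟩
      funext v
      simp [lap_ker_const V L hsymm hrowsum hoffdiag hconn y hy v (Classical.arbitrary V)]
    · rw [Submodule.span_singleton_le_iff_mem, LinearMap.mem_ker]
      funext v
      simp only [hA, Matrix.mulVecLin_apply, Matrix.mulVec, dotProduct,
        Pi.one_apply, mul_one, Pi.zero_apply]
      exact hrowq v
  have hone : (1 : V → ℚ) ≠ 0 := fun h => by
    simpa using congrFun h (Classical.arbitrary V)
  have hkerrank : Module.finrank ℚ (LinearMap.ker A) = 1 := by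
    rw [hker]; exact finrank_span_singleton hone
  have hrange_le : LinearMap.range A ≤ LinearMap.ker d := by
    rintro - ⟨ξ, rfl⟩
    rw [LinearMap.mem_ker, hdapp]
    have hsw : ∑ v, ((Lq V L).mulVec ξ) v = ∑ w, (∑ v, Lq V L v w) * ξ w := by
      simp only [Matrix.mulVec, dotProduct, Finset.sum_mul]
      exact Finset.sum_comm
    rw [show (A ξ : V → ℚ) = (Lq V L).mulVec ξ from rfl, hsw]
    simp [hcolq]
  have hdrange : LinearMap.range d = ⊤ := by
    rw [LinearMap.range_eq_top]
    intro r
    refine ⟨Pi.single (Classical.arbitrary V) r, ?_⟩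
    rw [hdapp]
    simp
  have hcard : Module.finrank ℚ (V → ℚ) = Fintype.card V :=
    Module.finrank_fintype_fun_eq_card ℚ
  have h1 := LinearMap.finrank_range_add_finrank_ker A
  have h2 := LinearMap.finrank_range_add_finrank_ker d
  rw [hcard, hkerrank] at h1
  rw [hcard, hdrange, finrank_top] at h2
  have hr1 : Module.finrank ℚ ℚ = 1 := Module.finrank_self ℚ
  rw [hr1] at h2
  have heq : LinearMap.range A = LinearMap.ker d :=
    Submodule.eq_of_le_of_finrank_eq hrange_le (by omega)
  have hxk : x ∈ LinearMap.ker d := by rw [LinearMap.mem_ker, hdapp]; exact hx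
  rw [← heq] at hxk
  exact hxk

noncomputable def Xi (x : ↥(LinearMap.ker (degMap V))) : V → ℚ :=
  (lap_surj V L hsymm hrowsum hoffdiag hconn (cst V x) (sum_cst V x)).choose

lemma Xi_spec (x : ↥(LinearMap.ker (degMap V))) :
    (Lq V L).mulVec (Xi V L hsymm hrowsum hoffdiag hconn x) = cst V x :=
  (lap_surj V L hsymm hrowsum hoffdiag hconn (cst V x) (sum_cst V x)).choose_spec

noncomputable def qq (x y : ↥(LinearMap.ker (degMap V))) : ℚ :=
  Xi V L hsymm hrowsum hoffdiag hconn x ⬝ᵥ cst V y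

lemma qq_spec (x y : ↥(LinearMap.ker (degMap V))) (ξ : V → ℚ)
    (hξ : (Lq V L).mulVec ξ = cst V x) :
    ξ ⬝ᵥ cst V y = qq V L hsymm hrowsum hoffdiag hconn x y := by
  set ζ := Xi V L hsymm hrowsum hoffdiag hconn x with hζ
  have hdiff : (Lq V L).mulVec (ξ - ζ) = 0 := by
    rw [Matrix.mulVec_sub, hξ, hζ, Xi_spec, sub_self]
  have hconst := lap_ker_const V L hsymm hrowsum hoffdiag hconn (ξ - ζ) hdiff
  set c := (ξ - ζ) (Classical.arbitrary V) with hc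
  have : (ξ - ζ) ⬝ᵥ cst V y = 0 := by
    have : ∀ v, (ξ - ζ) v = c := fun v => hconst v (Classical.arbitrary V)
    calc (ξ - ζ) ⬝ᵥ cst V y = ∑ v, c * cst V y v := by
          refine Finset.sum_congr rfl fun v _ => by rw [this v]
      _ = c * ∑ v, cst V y v := by rw [Finset.mul_sum]
      _ = 0 := by rw [sum_cst, mul_zero]
  have hsub : ξ ⬝ᵥ cst V y - ζ ⬝ᵥ cst V y = 0 := by
    rw [← sub_dotProduct]; exact this
  have : ξ ⬝ᵥ cst V y = ζ ⬝ᵥ cst V y := by linarith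
  rw [this]; rfl

-- abbreviate hypothesis bundle in names below via section variables
noncomputable def qlin :
    ↥(LinearMap.ker (degMap V)) →ₗ[ℤ] ↥(LinearMap.ker (degMap V)) →ₗ[ℤ] ℚ :=
  LinearMap.mk₂ ℤ (qq V L hsymm hrowsum hoffdiag hconn)
    (fun x x' y => by
      rw [← qq_spec V L hsymm hrowsum hoffdiag hconn (x + x') y
        (Xi V L hsymm hrowsum hoffdiag hconn x + Xi V L hsymm hrowsum hoffdiag hconn x')
        (by rw [Matrix.mulVec_add, Xi_spec, Xi_spec, cst_add]),
        add_dotProduct]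
      rfl)
    (fun c x y => by
      rw [← qq_spec V L hsymm hrowsum hoffdiag hconn (c • x) y
        ((c : ℚ) • Xi V L hsymm hrowsum hoffdiag hconn x)
        (by rw [Matrix.mulVec_smul, Xi_spec, cst_smul]),
        smul_dotProduct]
      simp [qq, zsmul_eq_mul])
    (fun x y y' => by
      simp only [qq, cst_add, dotProduct_add])
    (fun c x y => by
      simp only [qq, cst_smul, dotProduct_smul]
      simp [zsmul_eq_mul])

lemma qlin_apply (x y : ↥(LinearMap.ker (degMap V))) :
    qlin V L hsymm hrowsum hoffdiag hconn x y = qq V L hsymm hrowsum hoffdiag hconn x y := rfl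

lemma qq_lap_right (x y : ↥(LinearMap.ker (degMap V))) (hy : y ∈ SS V L) :
    ∃ n : ℤ, (n : ℚ) = qq V L hsymm hrowsum hoffdiag hconn x y := by
  obtain ⟨u, hu⟩ := hy
  refine ⟨∑ v, (x : V → ℤ) v * u v, ?_⟩
  have hcy : cst V y = (Lq V L).mulVec (fun v => (u v : ℚ)) := by
    rw [cst_mulVec]
    funext v
    simp only [cst]
    rw [show (lapMap V L) u = ((y : V → ℤ)) from hu]
  have : qq V L hsymm hrowsum hoffdiag hconn x y
      = cst V x ⬝ᵥ (fun v => (u v : ℚ)) := by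
    rw [← Xi_spec V L hsymm hrowsum hoffdiag hconn x]
    conv_lhs => rw [qq, hcy, symdot V L hsymm]
  rw [this]
  simp only [dotProduct, cst]
  push_cast
  rfl

lemma qq_lap_left (x y : ↥(LinearMap.ker (degMap V))) (hx : x ∈ SS V L) :
    ∃ n : ℤ, (n : ℚ) = qq V L hsymm hrowsum hoffdiag hconn x y := by
  obtain ⟨u, hu⟩ := hx
  refine ⟨∑ v, u v * (y : V → ℤ) v, ?_⟩
  have hcx : (Lq V L).mulVec (fun v => (u v : ℚ)) = cst V x := by
    rw [cst_mulVec]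
    funext v
    simp only [cst]
    rw [show (lapMap V L) u = ((x : V → ℤ)) from hu]
  rw [← qq_spec V L hsymm hrowsum hoffdiag hconn x y _ hcx]
  simp only [dotProduct, cst]
  push_cast
  rfl

noncomputable def mkML : ℚ →ₗ[ℤ] M := (mkM).toIntLinearMap

noncomputable def B2 (x : ↥(LinearMap.ker (degMap V))) : jacQuot V L →ₗ[ℤ] M :=
  Submodule.liftQ _ (mkML ∘ₗ qlin V L hsymm hrowsum hoffdiag hconn x)
    (fun y hy => by
      rw [LinearMap.mem_ker, LinearMap.comp_apply, qlin_apply]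
      exact (mkM_eq_zero_iff _).mpr (qq_lap_right V L hsymm hrowsum hoffdiag hconn x y hy))

lemma B2_mk (x y : ↥(LinearMap.ker (degMap V))) :
    B2 V L hsymm hrowsum hoffdiag hconn x (Submodule.Quotient.mk y)
      = mkM (qq V L hsymm hrowsum hoffdiag hconn x y) := by
  rw [B2, Submodule.liftQ_apply, LinearMap.comp_apply, qlin_apply]
  rfl

noncomputable def B2L :
    ↥(LinearMap.ker (degMap V)) →ₗ[ℤ] (jacQuot V L →ₗ[ℤ] M) where
  toFun := B2 V L hsymm hrowsum hoffdiag hconn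
  map_add' := fun x x' => by
    apply LinearMap.ext; intro a
    obtain ⟨y, rfl⟩ := Submodule.Quotient.mk_surjective _ a
    rw [LinearMap.add_apply, B2_mk, B2_mk, B2_mk]
    rw [show qq V L hsymm hrowsum hoffdiag hconn (x + x') y
      = qq V L hsymm hrowsum hoffdiag hconn x y + qq V L hsymm hrowsum hoffdiag hconn x' y from
      by rw [← qlin_apply, ← qlin_apply, ← qlin_apply, map_add]; rfl]
    exact map_add mkM _ _
  map_smul' := fun c x => by
    apply LinearMap.ext; intro a
    obtain ⟨y, rfl⟩ := Submodule.Quotient.mk_surjective _ a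
    rw [RingHom.id_apply, LinearMap.smul_apply, B2_mk, B2_mk]
    rw [show qq V L hsymm hrowsum hoffdiag hconn (c • x) y
      = c • qq V L hsymm hrowsum hoffdiag hconn x y from
      by rw [← qlin_apply, ← qlin_apply, map_smul]; rfl]
    exact map_zsmul mkM _ _

noncomputable def BB : jacQuot V L →ₗ[ℤ] (jacQuot V L →ₗ[ℤ] M) :=
  Submodule.liftQ _ (B2L V L hsymm hrowsum hoffdiag hconn)
    (fun x hx => by
      rw [LinearMap.mem_ker]
      apply LinearMap.ext; intro a
      obtain ⟨y, rfl⟩ := Submodule.Quotient.mk_surjective _ a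
      show B2 V L hsymm hrowsum hoffdiag hconn x (Submodule.Quotient.mk y) = 0
      rw [B2_mk]
      exact (mkM_eq_zero_iff _).mpr (qq_lap_left V L hsymm hrowsum hoffdiag hconn x y hx))

lemma BB_mk (x y : ↥(LinearMap.ker (degMap V))) :
    BB V L hsymm hrowsum hoffdiag hconn (Submodule.Quotient.mk x) (Submodule.Quotient.mk y)
      = mkM (qq V L hsymm hrowsum hoffdiag hconn x y) := by
  rw [BB, Submodule.liftQ_apply]
  exact B2_mk V L hsymm hrowsum hoffdiag hconn x y

include hsymm hrowsum in
lemma colq (w : V) : ∑ v, Lq V L v w = 0 := by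
  have : ∑ v, ((L v w : ℚ)) = 0 := by exact_mod_cast colsum V L hsymm hrowsum w
  simpa [Lq] using this

include hsymm hrowsum in
lemma rowq (v : V) : ∑ w, Lq V L v w = 0 := by
  have : ∑ w, ((L v w : ℚ)) = 0 := by exact_mod_cast hrowsum v
  simpa [Lq] using this

lemma dot_basK (v0 v : V) (ξ : V → ℚ) :
    ξ ⬝ᵥ cst V (basK V v0 v) = ξ v - ξ v0 := by
  simp only [dotProduct, cst_basK, mul_sub, Finset.sum_sub_distrib, mul_ite,
    mul_one, mul_zero]
  congr 1 <;> simp [eq_comm]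

include hsymm hrowsum hoffdiag hconn in
lemma BB_inj (x : ↥(LinearMap.ker (degMap V)))
    (h : ∀ y : ↥(LinearMap.ker (degMap V)),
      BB V L hsymm hrowsum hoffdiag hconn (Submodule.Quotient.mk x)
        (Submodule.Quotient.mk y) = 0) :
    (Submodule.Quotient.mk x : jacQuot V L) = 0 := by
  classical
  set v0 := Classical.arbitrary V with hv0
  set ξ := Xi V L hsymm hrowsum hoffdiag hconn x with hξdef
  have hm : ∀ v, ∃ m : ℤ, (m : ℚ) = ξ v - ξ v0 := by
    intro v
    have h1 := h (basK V v0 v)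
    rw [BB_mk] at h1
    obtain ⟨m, hm⟩ := (mkM_eq_zero_iff _).mp h1
    refine ⟨m, ?_⟩
    rw [hm, qq, ← hξdef, dot_basK]
  choose m hmv using hm
  have hxi : ξ = (fun w => (m w : ℚ)) + (fun _ => ξ v0) := by
    funext w
    simp only [Pi.add_apply]
    rw [hmv w]; ring
  have hlap : cst V x = fun v => (((lapMap V L) m) v : ℚ) := by
    rw [← Xi_spec V L hsymm hrowsum hoffdiag hconn x, ← hξdef, ← cst_mulVec, hxi,
      Matrix.mulVec_add]
    funext v
    have hz : ((Lq V L).mulVec (fun _ => ξ v0)) v = 0 := by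
      simp only [Matrix.mulVec, dotProduct]
      rw [← Finset.sum_mul, rowq V L hsymm hrowsum, zero_mul]
    simp [hz]
  have hx_eq : ((x : V → ℤ)) = (lapMap V L) m := by
    funext v
    have := congrFun hlap v
    simp only [cst] at this
    exact_mod_cast this
  rw [Submodule.Quotient.mk_eq_zero]
  exact ⟨m, hx_eq.symm⟩

include hsymm hrowsum hoffdiag hconn in
lemma BB_surj (φ : jacQuot V L →+ M) :
    ∃ x : ↥(LinearMap.ker (degMap V)), ∀ y : ↥(LinearMap.ker (degMap V)),
      BB V L hsymm hrowsum hoffdiag hconn (Submodule.Quotient.mk x)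
        (Submodule.Quotient.mk y) = φ (Submodule.Quotient.mk y) := by
  classical
  set v0 := Classical.arbitrary V with hv0
  have hrex : ∀ v : V, ∃ r : ℚ, mkM r = φ (Submodule.Quotient.mk (basK V v0 v)) :=
    fun v => QuotientAddGroup.mk'_surjective _ _
  choose r hr using hrex
  have hrep : ∀ y : ↥(LinearMap.ker (degMap V)),
      mkM (r ⬝ᵥ cst V y) = φ (Submodule.Quotient.mk y) := by
    intro y
    have h1 : r ⬝ᵥ cst V y = ∑ v, ((y : V → ℤ) v) • r v := by
      simp only [dotProduct, cst, zsmul_eq_mul]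
      refine Finset.sum_congr rfl fun v _ => by ring
    rw [h1, map_sum]
    have h2 : ∀ v, mkM (((y : V → ℤ) v) • r v)
        = φ (((y : V → ℤ) v) • Submodule.Quotient.mk (basK V v0 v)) := by
      intro v
      rw [map_zsmul, hr v, ← map_zsmul]
    simp_rw [h2]
    rw [← map_sum]
    congr 1
    have h3 : ∑ v, ((y : V → ℤ) v) • (Submodule.Quotient.mk (basK V v0 v) : jacQuot V L)
        = Submodule.Quotient.mk (∑ v, ((y : V → ℤ) v) • basK V v0 v) := by
      simp_rw [← Submodule.mkQ_apply, ← map_smul, ← map_sum]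
    rw [h3, sum_smul_basK]
  set x' : V → ℚ := (Lq V L).mulVec r with hx'
  have hint : ∀ v, ∃ m : ℤ, (m : ℚ) = x' v := by
    intro v
    have h4 : r ⬝ᵥ cst V (colK V L hsymm hrowsum v) = x' v := by
      simp only [dotProduct, hx', Matrix.mulVec]
      refine Finset.sum_congr rfl fun w _ => ?_
      rw [cst_colK]; ring
    have h5 : mkM (x' v) = φ (Submodule.Quotient.mk (colK V L hsymm hrowsum v)) := by
      rw [← h4]; exact hrep _
    apply (mkM_eq_zero_iff _).mp
    rw [h5, show (Submodule.Quotient.mk (colK V L hsymm hrowsum v) : jacQuot V L) = 0 from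
      (Submodule.Quotient.mk_eq_zero _).mpr (colK_mem V L hsymm hrowsum v), map_zero]
  choose xi hxi using hint
  have hdeg : ∑ v, xi v = 0 := by
    have hc : (((∑ v, xi v : ℤ) : ℚ)) = 0 := by
      push_cast
      simp_rw [fun v => hxi v]
      have : ∑ v, x' v = ∑ w, (∑ v, Lq V L v w) * r w := by
        simp only [hx', Matrix.mulVec, dotProduct, Finset.sum_mul]
        exact Finset.sum_comm
      rw [this]
      simp [colq V L hsymm hrowsum]
    exact_mod_cast hc
  refine ⟨⟨xi, by rw [LinearMap.mem_ker, degMap_apply]; exact hdeg⟩, fun y => ?_⟩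
  rw [BB_mk]
  have hmul : (Lq V L).mulVec r = cst V ⟨xi, by rw [LinearMap.mem_ker, degMap_apply]; exact hdeg⟩ := by
    funext v
    exact (hxi v).symm
  rw [← qq_spec V L hsymm hrowsum hoffdiag hconn _ y r hmul]
  exact hrep y

include hsymm hrowsum hoffdiag hconn in
lemma jac_torsion (a : jacQuot V L) : ∃ n : ℤ, n ≠ 0 ∧ n • a = 0 := by
  classical
  obtain ⟨x, rfl⟩ := Submodule.Quotient.mk_surjective _ a
  set ξ := Xi V L hsymm hrowsum hoffdiag hconn x with hξdef
  set D : ℤ := ∏ v, ((ξ v).den : ℤ) with hD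
  have hDpos : 0 < D := Finset.prod_pos fun v _ => by positivity
  have key : ∀ v, ∃ m : ℤ, (m : ℚ) = (D : ℚ) * ξ v := by
    intro v
    obtain ⟨k, hk⟩ : ((ξ v).den : ℤ) ∣ D := Finset.dvd_prod_of_mem _ (Finset.mem_univ v)
    refine ⟨k * (ξ v).num, ?_⟩
    have hden : ((ξ v).den : ℚ) ≠ 0 := by
      exact_mod_cast (ξ v).den_nz
    have hq : ((ξ v).num : ℚ) / ((ξ v).den : ℚ) = ξ v := Rat.num_div_den _
    have h2 : ((ξ v).num : ℚ) = ξ v * ((ξ v).den : ℚ) := (div_eq_iff hden).mp hq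
    have h3 : (D : ℚ) = ((ξ v).den : ℚ) * (k : ℚ) := by exact_mod_cast hk
    push_cast
    rw [h2, h3]
    ring
  choose u hu using key
  have hlap : (lapMap V L) u = D • (x : V → ℤ) := by
    have hcast : (Lq V L).mulVec (fun v => (u v : ℚ)) = fun v => ((D • (x : V → ℤ)) v : ℚ) := by
      have h1 : (fun v => ((u v : ℚ))) = (D : ℚ) • ξ := by
        funext v; rw [hu v]; simp
      rw [h1, Matrix.mulVec_smul, hξdef, Xi_spec]
      funext v
      simp [cst]
    rw [cst_mulVec] at hcast
    funext v
    have := congrFun hcast v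
    exact_mod_cast this
  refine ⟨D, hDpos.ne', ?_⟩
  rw [← Submodule.mkQ_apply, ← map_smul, Submodule.mkQ_apply, Submodule.Quotient.mk_eq_zero]
  exact ⟨u, by rw [hlap]; rfl⟩

include hsymm hrowsum hoffdiag hconn in
lemma jac_finite : Finite (jacQuot V L) := by
  haveI h1 : Module.Finite ℤ ↥(LinearMap.ker (degMap V)) :=
    Module.Finite.iff_fg.mpr (IsNoetherian.noetherian _)
  haveI h2 : Module.Finite ℤ (jacQuot V L) :=
    Module.Finite.of_surjective (jacMk V L) (Submodule.mkQ_surjective _)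
  apply Module.finite_of_fg_torsion (jacQuot V L)
  intro a
  obtain ⟨n, hn, hna⟩ := jac_torsion V L hsymm hrowsum hoffdiag hconn a
  exact ⟨⟨n, mem_nonZeroDivisors_of_ne_zero hn⟩, hna⟩

end Main

/- STATEMENT 16:
Γ a group acting on a finite nonempty set V, L a Γ-equivariant integer Laplacian-type
matrix (symmetric, nonpositive off-diagonal entries, zero row sums, equivariant) whose
support graph is connected.  Then Jac = ker(deg)/L(ℤ^V) is finite, and there is an
isomorphism of ℤ[Γ]-modules Jac ≅ Hom_ℤ(Jac, ℚ/ℤ), where Γ acts on the Pontryagin dual by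
(γ·φ)(b) = φ(γ⁻¹·b).  Equivariance of the additive isomorphism e is expressed on lifts:
e(π(γ•x))(π y) = e(π x)(π(γ⁻¹•y)) for x, y ∈ ker(deg). -/
theorem jacobian_self_dual
    (V : Type) [Fintype V] [Nonempty V] (Γ : Type) [Group Γ] [MulAction Γ V]
    (L : V → V → ℤ)
    (hsymm : ∀ v w, L v w = L w v)
    (hoffdiag : ∀ v w, v ≠ w → L v w ≤ 0)
    (hrowsum : ∀ v, ∑ w, L v w = 0)
    (hequiv : ∀ (γ : Γ) (v w : V), L (γ • v) (γ • w) = L v w)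
    (hconn : (SimpleGraph.fromRel fun v w => L v w ≠ 0).Connected) :
    Finite (jacQuot V L) ∧
      ∃ e : jacQuot V L ≃+ (jacQuot V L →+ ℚ ⧸ AddSubgroup.zmultiples (1 : ℚ)),
        ∀ (γ : Γ) (x y x' y' : LinearMap.ker (degMap V)),
          (x' : V → ℤ) = actMap V Γ γ (x : V → ℤ) →
          (y' : V → ℤ) = actMap V Γ γ⁻¹ (y : V → ℤ) →
          e (jacMk V L x') (jacMk V L y) = e (jacMk V L x) (jacMk V L y') := by
  classical
  constructor
  · exact jac_finite V L hsymm hrowsum hoffdiag hconn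
  · let e0 : jacQuot V L →+ (jacQuot V L →+ ℚ ⧸ AddSubgroup.zmultiples (1 : ℚ)) :=
      { toFun := fun a => (BB V L hsymm hrowsum hoffdiag hconn a).toAddMonoidHom
        map_zero' := by ext b; simp
        map_add' := fun a a' => by ext b; simp }
    have he0 : ∀ x y : ↥(LinearMap.ker (degMap V)),
        e0 (jacMk V L x) (jacMk V L y) = mkM (qq V L hsymm hrowsum hoffdiag hconn x y) := by
      intro x y
      show BB V L hsymm hrowsum hoffdiag hconn (jacMk V L x) (jacMk V L y) = _
      rw [jacMk, Submodule.mkQ_apply, Submodule.mkQ_apply, BB_mk]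
    have hinj : Function.Injective e0 := by
      rw [injective_iff_map_eq_zero]
      intro a ha
      obtain ⟨x, rfl⟩ := Submodule.Quotient.mk_surjective _ a
      apply BB_inj V L hsymm hrowsum hoffdiag hconn x
      intro y
      calc BB V L hsymm hrowsum hoffdiag hconn (Submodule.Quotient.mk x)
            (Submodule.Quotient.mk y)
          = e0 (Submodule.Quotient.mk x) (Submodule.Quotient.mk y) := rfl
        _ = 0 := by rw [ha]; rfl
    have hsurjj : Function.Surjective e0 := by
      intro φ
      obtain ⟨x, hx⟩ := BB_surj V L hsymm hrowsum hoffdiag hconn φ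
      refine ⟨Submodule.Quotient.mk x, ?_⟩
      ext b
      obtain ⟨y, rfl⟩ := Submodule.Quotient.mk_surjective _ b
      exact hx y
    refine ⟨AddEquiv.ofBijective e0 ⟨hinj, hsurjj⟩, ?_⟩
    intro γ x y x' y' hx' hy'
    have happ : ∀ a b, (AddEquiv.ofBijective e0 ⟨hinj, hsurjj⟩) a b = e0 a b := fun a b => rfl
    rw [happ, happ, he0, he0]
    congr 1
    -- it remains to show qq x' y = qq x y'
    set ξ := Xi V L hsymm hrowsum hoffdiag hconn x with hξdef
    have hξ : (Lq V L).mulVec ξ = cst V x := Xi_spec V L hsymm hrowsum hoffdiag hconn x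
    have hx'v : ∀ v, (x' : V → ℤ) v = (x : V → ℤ) (γ⁻¹ • v) := by
      intro v; rw [hx']; rfl
    have hy'v : ∀ v, (y' : V → ℤ) v = (y : V → ℤ) (γ • v) := by
      intro v; rw [hy']
      show (y : V → ℤ) ((γ⁻¹)⁻¹ • v) = _
      rw [inv_inv]
    have hmulγ : (Lq V L).mulVec (fun v => ξ (γ⁻¹ • v)) = cst V x' := by
      funext v
      have hre : ∑ w, Lq V L v w * ξ (γ⁻¹ • w) = ∑ u, Lq V L (γ⁻¹ • v) u * ξ u := by
        rw [← Equiv.sum_comp (MulAction.toPerm γ) (fun w => Lq V L v w * ξ (γ⁻¹ • w))]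
        refine Finset.sum_congr rfl fun u _ => ?_
        have h1 : (MulAction.toPerm γ) u = γ • u := rfl
        rw [h1, inv_smul_smul]
        congr 1
        show ((L v (γ • u) : ℚ)) = ((L (γ⁻¹ • v) u : ℚ))
        have h2 := hequiv γ (γ⁻¹ • v) u
        rw [smul_inv_smul] at h2
        exact_mod_cast h2
      show ∑ w, Lq V L v w * ξ (γ⁻¹ • w) = cst V x' v
      rw [hre]
      have h3 : ∑ u, Lq V L (γ⁻¹ • v) u * ξ u = ((Lq V L).mulVec ξ) (γ⁻¹ • v) := rfl
      rw [h3, hξ]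
      simp only [cst]
      exact_mod_cast (hx'v v).symm
    have hdot : dotProduct (fun v => ξ (γ⁻¹ • v)) (cst V y)
        = dotProduct ξ (cst V y') := by
      show ∑ v, ξ (γ⁻¹ • v) * cst V y v = _
      rw [← Equiv.sum_comp (MulAction.toPerm γ) (fun v => ξ (γ⁻¹ • v) * cst V y v)]
      refine Finset.sum_congr rfl fun u _ => ?_
      show ξ (γ⁻¹ • γ • u) * cst V y (γ • u) = ξ u * cst V y' u
      rw [inv_smul_smul]
      congr 1
      simp only [cst]
      exact_mod_cast (hy'v u).symm
    rw [← qq_spec V L hsymm hrowsum hoffdiag hconn x' y _ hmulγ, hdot,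
      qq_spec V L hsymm hrowsum hoffdiag hconn x y' ξ hξ]
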